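/- Let X be a d-space with no loops. Define the directed suspension ΣX = (X × [0,1]) / (X × {0}), (X × {1}), collapsing the bottom to a point 𝟎 and the top to a point 𝟏, with the quotient d-structure. Then ΣX has no loops. -/

import Mathlib

def Path.compMono {X : Type*} [TopologicalSpace X] {x y : X} (γ : Path x y)
    (f : C(unitInterval, unitInterval)) : Path (γ (f 0)) (γ (f 1)) where
  toFun := fun t => γ (f t)
  continuous_toFun := γ.continuous.comp f.continuous
  source' := rfl
  target' := rfl

structure DStruct (X : Type*) [TopologicalSpace X] where
  IsDPath : ∀ ⦃x y : X⦄, Path x y → Prop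
  refl : ∀ x : X, IsDPath (Path.refl x)
  trans : ∀ ⦃x y z : X⦄ (α : Path x y) (β : Path y z),
    IsDPath α → IsDPath β → IsDPath (α.trans β)
  reparam : ∀ ⦃x y : X⦄ (γ : Path x y) (f : C(unitInterval, unitInterval)),
    IsDPath γ → Monotone ⇑f → IsDPath (γ.compMono f)

def DStruct.le {X : Type*} [TopologicalSpace X] (D : DStruct X) (x y : X) : Prop :=
  ∃ γ : Path x y, D.IsDPath γ

def DStruct.NoLoops {X : Type*} [TopologicalSpace X] (D : DStruct X) : Prop :=
  ∀ (x : X) (γ : Path x x), D.IsDPath γ → ∀ t, γ t = x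

/-- The setoid collapsing the bottom `X × {0}` and the top `X × {1}` of the cylinder. -/
def suspSetoid (X : Type*) : Setoid (X × unitInterval) where
  r p q := p = q ∨ (p.2 = 0 ∧ q.2 = 0) ∨ (p.2 = 1 ∧ q.2 = 1)
  iseqv := by
    constructor
    · exact fun p => Or.inl rfl
    · rintro p q (rfl | ⟨h1, h2⟩ | ⟨h1, h2⟩)
      · exact Or.inl rfl
      · exact Or.inr (Or.inl ⟨h2, h1⟩)
      · exact Or.inr (Or.inr ⟨h2, h1⟩)
    · rintro p q r (rfl | ⟨h1, h2⟩ | ⟨h1, h2⟩) (rfl | ⟨h3, h4⟩ | ⟨h3, h4⟩)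
      · exact Or.inl rfl
      · exact Or.inr (Or.inl ⟨h3, h4⟩)
      · exact Or.inr (Or.inr ⟨h3, h4⟩)
      · exact Or.inr (Or.inl ⟨h1, h2⟩)
      · exact Or.inr (Or.inl ⟨h1, h4⟩)
      · exact absurd (h2 ▸ h3) (by norm_num [Subtype.ext_iff])
      · exact Or.inr (Or.inr ⟨h1, h2⟩)
      · exact absurd (h2 ▸ h3) (by norm_num [Subtype.ext_iff])
      · exact Or.inr (Or.inr ⟨h1, h4⟩)

/-- The directed suspension of a space, as a topological space. -/
def Susp (X : Type*) [TopologicalSpace X] : Type _ := Quotient (suspSetoid X)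

instance (X : Type*) [TopologicalSpace X] : TopologicalSpace (Susp X) :=
  instTopologicalSpaceQuotient

/-- The projection to the suspension of a pair of paths in `X` and in `[0,1]`. -/
def projPath {X : Type*} [TopologicalSpace X] {x y : X} {s t : unitInterval}
    (γ : Path x y) (f : Path s t) :
    Path (Quotient.mk (suspSetoid X) (x, s)) (Quotient.mk (suspSetoid X) (y, t)) where
  toFun u := Quotient.mk (suspSetoid X) (γ u, f u)
  continuous_toFun := continuous_quotient_mk'.comp (γ.continuous.prodMk f.continuous)
  source' := by simp
  target' := by simp

/-- The quotient d-structure on the directed suspension: the smallest family of paths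
containing all projections of directed product paths and closed under concatenation and
monotone reparametrization. -/
inductive SuspD {X : Type*} [TopologicalSpace X] (DX : DStruct X) :
    ∀ ⦃p q : Susp X⦄, Path p q → Prop
  | proj {x y : X} {s t : unitInterval} (γ : Path x y) (f : Path s t)
      (hγ : DX.IsDPath γ) (hf : Monotone ⇑f) : SuspD DX (projPath γ f)
  | trans {p q r : Susp X} (α : Path p q) (β : Path q r) :
      SuspD DX α → SuspD DX β → SuspD DX (α.trans β)
  | reparam {p q : Susp X} (γ : Path p q) (f : C(unitInterval, unitInterval)) :
      SuspD DX γ → Monotone ⇑f → SuspD DX (γ.compMono f)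


section SuspNoLoopsProof

variable {X : Type*} [TopologicalSpace X]

/-- The height of a point of the suspension. -/
def heightSusp : Susp X → unitInterval :=
  Quotient.lift (fun p => p.2) (by
    rintro p q (rfl | ⟨h1, h2⟩ | ⟨h1, h2⟩)
    · rfl
    · simp [h1, h2]
    · simp [h1, h2])

@[simp] lemma heightSusp_mk (x : X) (s : unitInterval) :
    heightSusp (Quotient.mk (suspSetoid X) (x, s)) = s := rfl

/-- Level-wise order relation on the suspension. -/
def LevLE (DX : DStruct X) (p q : Susp X) : Prop :=
  p = q ∨ ∃ x y s, DX.le x y ∧ p = Quotient.mk (suspSetoid X) (x, s) ∧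
    q = Quotient.mk (suspSetoid X) (y, s)

/-- The combined order relation. -/
def SLE (DX : DStruct X) (p q : Susp X) : Prop :=
  heightSusp p < heightSusp q ∨ (heightSusp p = heightSusp q ∧ LevLE DX p q)

lemma dle_of_dpath (DX : DStruct X) {x y : X} {γ : Path x y} (hγ : DX.IsDPath γ)
    {a b : unitInterval} (hab : a ≤ b) : DX.le (γ a) (γ b) := by
  have hab' : (a : ℝ) ≤ b := hab
  have hmem : ∀ u : unitInterval, a.1 + u.1 * (b.1 - a.1) ∈ unitInterval := by
    intro u
    constructor
    · nlinarith [u.2.1, a.2.1]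
    · nlinarith [u.2.2, b.2.2, u.2.1]
  let f : C(unitInterval, unitInterval) :=
    ⟨fun u => ⟨a.1 + u.1 * (b.1 - a.1), hmem u⟩, by
      apply Continuous.subtype_mk
      fun_prop⟩
  have hmono : Monotone f := by
    intro u v huv
    have huv' : (u : ℝ) ≤ v := huv
    simp only [f, ContinuousMap.coe_mk, Subtype.mk_le_mk]
    nlinarith
  have h0 : f 0 = a := by
    simp only [f, ContinuousMap.coe_mk]
    ext; simp
  have h1 : f 1 = b := by
    simp only [f, ContinuousMap.coe_mk]
    ext; simp
  have key : DX.le (γ (f 0)) (γ (f 1)) := ⟨_, DX.reparam γ f hγ hmono⟩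
  rwa [h0, h1] at key

lemma sle_trans (DX : DStruct X) {p q r : Susp X} (h1 : SLE DX p q) (h2 : SLE DX q r) :
    SLE DX p r := by
  rcases h1 with h1 | ⟨he1, hl1⟩
  · rcases h2 with h2 | ⟨he2, _⟩
    · exact Or.inl (h1.trans h2)
    · exact Or.inl (he2 ▸ h1)
  · rcases h2 with h2 | ⟨he2, hl2⟩
    · exact Or.inl (he1 ▸ h2)
    · refine Or.inr ⟨he1.trans he2, ?_⟩
      rcases hl1 with rfl | ⟨x, y, s, hxy, hp, hq⟩
      · exact hl2
      rcases hl2 with rfl | ⟨y', z, s', hyz, hq2, hr⟩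
      · exact Or.inr ⟨x, y, s, hxy, hp, hq⟩
      have heq : Quotient.mk (suspSetoid X) (y, s) = Quotient.mk (suspSetoid X) (y', s') :=
        hq.symm.trans hq2
      have hss : s = s' := congrArg heightSusp heq
      subst hss
      rcases Quotient.exact heq with heq2 | ⟨h0, _⟩ | ⟨h0, _⟩
      · have hy : y = y' := congrArg Prod.fst heq2
        subst hy
        refine Or.inr ⟨x, z, s, ?_, hp, hr⟩
        obtain ⟨α, hα⟩ := hxy
        obtain ⟨β, hβ⟩ := hyz
        exact ⟨α.trans β, DX.trans α β hα hβ⟩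
      · refine Or.inr ⟨y', z, s, hyz, ?_, hr⟩
        rw [hp]
        exact Quotient.sound (Or.inr (Or.inl ⟨h0, h0⟩))
      · refine Or.inr ⟨y', z, s, hyz, ?_, hr⟩
        rw [hp]
        exact Quotient.sound (Or.inr (Or.inr ⟨h0, h0⟩))

@[simp] lemma projPath_apply {x y : X} {s t : unitInterval} (γ : Path x y) (f : Path s t)
    (u : unitInterval) : projPath γ f u = Quotient.mk (suspSetoid X) (γ u, f u) := rfl

@[simp] lemma compMono_apply {x y : X} (γ : Path x y) (f : C(unitInterval, unitInterval))
    (u : unitInterval) : γ.compMono f u = γ (f u) := rfl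

lemma sle_of_suspD (DX : DStruct X) {p q : Susp X} {γ : Path p q} (hγ : SuspD DX γ) :
    ∀ a b : unitInterval, a ≤ b → SLE DX (γ a) (γ b) := by
  induction hγ with
  | proj γ f hγ hf =>
    intro a b hab
    rcases lt_or_eq_of_le (hf hab) with h | h
    · exact Or.inl h
    · refine Or.inr ⟨h, Or.inr ⟨γ a, γ b, f a, dle_of_dpath DX hγ hab, rfl, ?_⟩⟩
      exact congrArg (fun u => Quotient.mk (suspSetoid X) (γ b, u)) h.symm
  | trans α β hα hβ ihα ihβ =>
    intro a b hab
    have hab' : (a : ℝ) ≤ b := hab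
    rw [Path.trans_apply, Path.trans_apply]
    split_ifs with ha hb hb
    · exact ihα _ _ (Subtype.mk_le_mk.mpr (by linarith))
    · have hA := ihα ⟨2 * (a : ℝ), by constructor <;> [nlinarith [a.2.1]; linarith]⟩ 1
        (Subtype.mk_le_mk.mpr (by simpa using by linarith))
      have hB := ihβ 0 ⟨2 * (b : ℝ) - 1, by constructor <;> [linarith; nlinarith [b.2.2]]⟩
        (Subtype.mk_le_mk.mpr (by simpa using by linarith))
      rw [α.target] at hA
      rw [β.source] at hB
      exact sle_trans DX hA hB
    · exact absurd (le_trans hab' hb) ha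
    · exact ihβ _ _ (Subtype.mk_le_mk.mpr (by linarith))
  | reparam γ f hγ hf ih =>
    intro a b hab
    exact ih (f a) (f b) (hf hab)

lemma sle_antisymm (DX : DStruct X) (hNL : DX.NoLoops) {p q : Susp X}
    (h1 : SLE DX p q) (h2 : SLE DX q p) : p = q := by
  rcases h1 with h1 | ⟨he1, hl1⟩
  · rcases h2 with h2 | ⟨he2, _⟩
    · exact absurd (h1.trans h2) (lt_irrefl _)
    · exact absurd (he2 ▸ h1) (lt_irrefl _)
  · rcases h2 with h2 | ⟨he2, hl2⟩
    · exact absurd (he1 ▸ h2) (lt_irrefl _)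
    rcases hl1 with rfl | ⟨x, y, s, hxy, hp, hq⟩
    · rfl
    rcases hl2 with h | ⟨y', x', s', hyx, hq2, hp2⟩
    · exact h.symm
    have heq : Quotient.mk (suspSetoid X) (y, s) = Quotient.mk (suspSetoid X) (y', s') :=
      hq.symm.trans hq2
    have heqx : Quotient.mk (suspSetoid X) (x, s) = Quotient.mk (suspSetoid X) (x', s') :=
      hp.symm.trans hp2
    have hss : s = s' := congrArg heightSusp heq
    subst hss
    rcases Quotient.exact heq with heq2 | ⟨h0, _⟩ | ⟨h0, _⟩
    · have hy : y = y' := congrArg Prod.fst heq2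
      subst hy
      rcases Quotient.exact heqx with heqx2 | ⟨h0, _⟩ | ⟨h0, _⟩
      · have hx : x = x' := congrArg Prod.fst heqx2
        subst hx
        -- directed loop at x through y
        obtain ⟨α, hα⟩ := hxy
        obtain ⟨β, hβ⟩ := hyx
        have hloop := hNL x (α.trans β) (DX.trans α β hα hβ) ⟨1/2, by norm_num⟩
        rw [Path.trans_apply] at hloop
        simp only [show ((⟨1/2, by norm_num⟩ : unitInterval) : ℝ) = 1/2 from rfl] at hloop
        rw [dif_pos (by norm_num)] at hloop
        have h2t : (⟨2 * (1/2 : ℝ), by norm_num⟩ : unitInterval) = 1 := by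
          ext; norm_num
        rw [h2t, α.target] at hloop
        rw [hp, hq, hloop]
      · rw [hp, hq]
        exact Quotient.sound (Or.inr (Or.inl ⟨h0, h0⟩))
      · rw [hp, hq]
        exact Quotient.sound (Or.inr (Or.inr ⟨h0, h0⟩))
    · rw [hp, hq]
      exact Quotient.sound (Or.inr (Or.inl ⟨h0, h0⟩))
    · rw [hp, hq]
      exact Quotient.sound (Or.inr (Or.inr ⟨h0, h0⟩))

end SuspNoLoopsProof

/-- The directed suspension of a d-space with no loops has no loops. -/
theorem susp_noLoops {X : Type*} [TopologicalSpace X] (DX : DStruct X)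
    (hNL : DX.NoLoops) :
    ∀ (p : Susp X) (γ : Path p p), SuspD DX γ → ∀ t, γ t = p := by
  intro p γ hγ t
  have h1 := sle_of_suspD DX hγ 0 t t.2.1
  have h2 := sle_of_suspD DX hγ t 1 t.2.2
  rw [γ.source] at h1
  rw [γ.target] at h2
  exact (sle_antisymm DX hNL h1 h2).symm
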